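/- Let σ be a positive semidefinite d×d matrix, T₁,…,T_k Hermitian d×d matrices, and X₁,…,X_ℓ Hermitian d×d matrices with X_j² = Id for all j. Let ε = (1/k)Σᵢ‖Tᵢσ^{1/2}‖_F² and δ = (1/ℓ)Σⱼ‖[Xⱼ, σ^{1/2}]‖_F², and assume Tr(σ) = 1 and σ ≠ 0. Then there exists a nonzero orthogonal projection R on C^d such that (1/k)Σᵢ‖TᵢR‖_F² ≤ C·ε·Tr(R) and (1/ℓ)Σⱼ‖[Xⱼ, R]‖_F² ≤ C·δ^{1/2}·Tr(R), for a universal constant C. -/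

import Mathlib

open Matrix ComplexOrder

/-- The square root of a positive semidefinite matrix, as defined in Mathlib (Dec 2024). -/
noncomputable def Matrix.PosSemidef.sqrt {n 𝕜 : Type*} [Fintype n] [DecidableEq n] [RCLike 𝕜]
    {A : Matrix n n 𝕜} (hA : A.PosSemidef) : Matrix n n 𝕜 :=
  hA.1.eigenvectorUnitary.1 * diagonal ((↑) ∘ (√·) ∘ hA.1.eigenvalues) *
  (star hA.1.eigenvectorUnitary : Matrix n n 𝕜)

theorem Matrix.PosSemidef.posSemidef_sqrt {n 𝕜 : Type*} [Fintype n] [DecidableEq n] [RCLike 𝕜]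
    {A : Matrix n n 𝕜} (hA : A.PosSemidef) : hA.sqrt.PosSemidef := by
  unfold Matrix.PosSemidef.sqrt
  have hD : (diagonal ((↑) ∘ (√·) ∘ hA.1.eigenvalues : n → 𝕜)).PosSemidef := by
    rw [posSemidef_diagonal_iff]
    intro i
    simp only [Function.comp_apply]
    exact RCLike.ofReal_nonneg.mpr (Real.sqrt_nonneg _)
  have := hD.mul_mul_conjTranspose_same (hA.1.eigenvectorUnitary : Matrix n n 𝕜)
  simpa only [Unitary.coe_star, Matrix.star_eq_conjTranspose] using this

theorem Matrix.PosSemidef.sqrt_mul_self {n 𝕜 : Type*} [Fintype n] [DecidableEq n] [RCLike 𝕜]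
    {A : Matrix n n 𝕜} (hA : A.PosSemidef) : hA.sqrt * hA.sqrt = A := by
  unfold Matrix.PosSemidef.sqrt
  conv_rhs => rw [hA.1.spectral_theorem, Unitary.conjStarAlgAut_apply]
  have hU := Unitary.coe_star_mul_self hA.1.eigenvectorUnitary
  calc _ = (hA.1.eigenvectorUnitary : Matrix n n 𝕜) * (diagonal ((↑) ∘ (√·) ∘ hA.1.eigenvalues)
        * ((star hA.1.eigenvectorUnitary : Matrix n n 𝕜) * (hA.1.eigenvectorUnitary : Matrix n n 𝕜))
        * diagonal ((↑) ∘ (√·) ∘ hA.1.eigenvalues)) * (star hA.1.eigenvectorUnitary : Matrix n n 𝕜) := by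
        simp only [Matrix.mul_assoc]
    _ = _ := by
        rw [hU, Matrix.mul_one, diagonal_mul_diagonal]
        refine congrArg (fun M => _ * M * _) (congrArg diagonal (funext fun i => ?_))
        simp only [Function.comp_apply]
        rw [← RCLike.ofReal_mul, Real.mul_self_sqrt (hA.eigenvalues_nonneg i)]

/-- The Frobenius norm of a complex square matrix: `(Tr(AᴴA))^{1/2}`. -/
noncomputable def frobNorm {d : ℕ} (A : Matrix (Fin d) (Fin d) ℂ) : ℝ :=
  Real.sqrt ((Aᴴ * A).trace.re)

/-- The Schatten-1 (nuclear) norm: the sum of singular values, i.e. `Tr((AᴴA)^{1/2})`. -/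
noncomputable def nucNorm {d : ℕ} (A : Matrix (Fin d) (Fin d) ℂ) : ℝ :=
  ((Matrix.posSemidef_conjTranspose_mul_self A).sqrt).trace.re
open Finset

lemma frobNorm_sq_eq {d : ℕ} (A : Matrix (Fin d) (Fin d) ℂ) :
    frobNorm A ^ 2 = ∑ m, ∑ n, Complex.normSq (A m n) := by
  have htr : (Aᴴ * A).trace = ((∑ m, ∑ n, Complex.normSq (A m n) : ℝ) : ℂ) := by
    have h1 : (Aᴴ * A).trace = ∑ n, ∑ m, ((Complex.normSq (A m n) : ℝ) : ℂ) := by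
      rw [Matrix.trace]
      apply Finset.sum_congr rfl; intro n _
      rw [Matrix.diag_apply, Matrix.mul_apply]
      apply Finset.sum_congr rfl; intro m _
      rw [Matrix.conjTranspose_apply, Complex.star_def, ← Complex.normSq_eq_conj_mul_self]
    rw [h1, Finset.sum_comm]
    push_cast
    rfl
  unfold frobNorm
  rw [htr, Complex.ofReal_re, Real.sq_sqrt]
  apply Finset.sum_nonneg
  intro m _
  exact Finset.sum_nonneg fun n _ => Complex.normSq_nonneg _

lemma conj_mul_conj {d : ℕ} {U : Matrix (Fin d) (Fin d) ℂ} (hU : Uᴴ * U = 1)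
    (A B : Matrix (Fin d) (Fin d) ℂ) :
    (U * A * Uᴴ) * (U * B * Uᴴ) = U * (A * B) * Uᴴ := by
  have h : ∀ M : Matrix (Fin d) (Fin d) ℂ, Uᴴ * (U * M) = M := by
    intro M; rw [← Matrix.mul_assoc, hU, Matrix.one_mul]
  calc (U * A * Uᴴ) * (U * B * Uᴴ) = U * (A * (Uᴴ * (U * (B * Uᴴ)))) := by
        simp only [Matrix.mul_assoc]
    _ = U * (A * B) * Uᴴ := by rw [h (B * Uᴴ)]; simp only [Matrix.mul_assoc]

lemma trace_conj {d : ℕ} {U : Matrix (Fin d) (Fin d) ℂ} (hU : Uᴴ * U = 1)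
    (A : Matrix (Fin d) (Fin d) ℂ) : (U * A * Uᴴ).trace = A.trace := by
  rw [Matrix.trace_mul_cycle, hU, Matrix.one_mul]

lemma frobNorm_conj {d : ℕ} {U : Matrix (Fin d) (Fin d) ℂ} (hU : Uᴴ * U = 1)
    (A : Matrix (Fin d) (Fin d) ℂ) : frobNorm (U * A * Uᴴ) = frobNorm A := by
  unfold frobNorm
  congr 1
  have h1 : (U * A * Uᴴ)ᴴ = U * Aᴴ * Uᴴ := by
    simp [Matrix.conjTranspose_mul, Matrix.mul_assoc]
  rw [h1, conj_mul_conj hU, trace_conj hU]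

lemma sum_rot {α β γ : Type*} [Fintype α] [Fintype β] [Fintype γ] (f : α → β → γ → ℝ) :
    ∑ a, ∑ b, ∑ c, f a b c = ∑ c, ∑ a, ∑ b, f a b c := by
  calc ∑ a, ∑ b, ∑ c, f a b c = ∑ a, ∑ c, ∑ b, f a b c := by
        apply Finset.sum_congr rfl; intros; exact Finset.sum_comm
    _ = ∑ c, ∑ a, ∑ b, f a b c := Finset.sum_comm
lemma core_select {d : ℕ} (lam : Fin d → ℝ) (hlam : ∀ n, 0 ≤ lam n)
    (hsum : ∑ n, lam n ^ 2 = 1)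
    (c : Fin d → ℝ) (hc : ∀ n, 0 ≤ c n)
    (x : Fin d → Fin d → ℝ) (hx : ∀ m n, 0 ≤ x m n)
    (B : ℝ) (hB : ∑ m, ∑ n, x m n * |lam m ^ 2 - lam n ^ 2| ≤ B) :
    ∃ e : Fin d → ℝ, (∀ n, e n = 0 ∨ e n = 1) ∧ 0 < ∑ n, e n ∧
      ∑ n, c n * e n ≤ 4 * (∑ n, c n * lam n ^ 2) * (∑ n, e n) ∧
      ∑ m, ∑ n, x m n * (e m - e n) ^ 2 ≤ 4 * B * (∑ n, e n) := by
  classical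
  set μ : Fin d → ℝ := lam ∘ Tuple.sort lam with hμdef
  have hmono : Monotone μ := Tuple.monotone_sort lam
  have hμ0 : ∀ t, 0 ≤ μ t := fun t => hlam _
  have himg : ∀ n : Fin d, ∃ t, μ t = lam n := fun n =>
    ⟨(Tuple.sort lam)⁻¹ n, by simp [hμdef]⟩
  -- weights
  set g : ℕ → ℝ := fun i => if h : i - 1 < d ∧ 0 < i then μ ⟨i - 1, h.1⟩ ^ 2 else 0 with hgdef
  have hg0 : g 0 = 0 := by simp [hgdef]
  have hgt : ∀ t : Fin d, g ((t : ℕ) + 1) = μ t ^ 2 := by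
    intro t
    have h : (t : ℕ) + 1 - 1 < d ∧ 0 < (t : ℕ) + 1 := ⟨by simpa using t.isLt, Nat.succ_pos _⟩
    have h2 : (⟨(t : ℕ) + 1 - 1, h.1⟩ : Fin d) = t := by ext; simp
    simp only [hgdef, dif_pos h, h2]
  have hw : ∀ t : Fin d, 0 ≤ g ((t : ℕ) + 1) - g (t : ℕ) := by
    intro t
    rw [hgt t]
    rcases Nat.eq_zero_or_pos (t : ℕ) with h0 | h0
    · rw [h0, hg0, sub_zero]; positivity
    · have h1 : (t : ℕ) - 1 < d := lt_trans (by omega) t.isLt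
      have hgeq : g (t : ℕ) = μ ⟨(t : ℕ) - 1, h1⟩ ^ 2 := by
        simp only [hgdef, dif_pos (⟨h1, h0⟩ : (t:ℕ) - 1 < d ∧ 0 < (t:ℕ))]
      rw [hgeq]
      have hle : μ ⟨(t : ℕ) - 1, h1⟩ ≤ μ t := hmono (Fin.le_def.mpr (Nat.sub_le _ _))
      have := pow_le_pow_left₀ (hμ0 _) hle 2
      linarith
  -- indicator
  set E : Fin d → Fin d → ℝ := fun t n => if μ t ≤ lam n then 1 else 0 with hEdef
  have hE01 : ∀ t n, E t n = 0 ∨ E t n = 1 := by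
    intro t n; by_cases h : μ t ≤ lam n <;> simp [hEdef, h]
  have hE0 : ∀ t n, 0 ≤ E t n := by
    intro t n; rcases hE01 t n with h | h <;> rw [h] <;> norm_num
  -- key telescoping identity
  have K1 : ∀ n : Fin d, ∑ t : Fin d, (g ((t:ℕ) + 1) - g (t:ℕ)) * E t n = lam n ^ 2 := by
    intro n
    set S : Finset (Fin d) := Finset.univ.filter (fun t => μ t ≤ lam n) with hSdef
    obtain ⟨j, hj⟩ := himg n
    have hjS : j ∈ S := by simp [hSdef, hj.le]
    have hSne : S.Nonempty := ⟨j, hjS⟩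
    set t₁ : Fin d := S.max' hSne with ht₁def
    have ht₁S : t₁ ∈ S := S.max'_mem hSne
    have hμt₁le : μ t₁ ≤ lam n := by
      have := ht₁S; simp [hSdef] at this; exact this
    have hμt₁ : μ t₁ = lam n :=
      le_antisymm hμt₁le (by rw [← hj]; exact hmono (S.le_max' j hjS))
    have hiff : ∀ t : Fin d, (μ t ≤ lam n ↔ (t : ℕ) ≤ (t₁ : ℕ)) := by
      intro t
      constructor
      · intro h; exact Fin.le_def.mp (S.le_max' t (by simp [hSdef, h]))
      · intro h; exact le_trans (hmono (Fin.le_def.mpr h)) hμt₁le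
    have step1 : ∑ t : Fin d, (g ((t:ℕ) + 1) - g (t:ℕ)) * E t n
        = ∑ i ∈ Finset.range d, (if i ≤ (t₁ : ℕ) then g (i + 1) - g i else 0) := by
      rw [← Fin.sum_univ_eq_sum_range (fun i => if i ≤ (t₁ : ℕ) then g (i + 1) - g i else 0) d]
      apply Finset.sum_congr rfl
      intro t _
      by_cases h : μ t ≤ lam n
      · rw [if_pos ((hiff t).mp h)]
        simp [hEdef, h]
      · rw [if_neg (fun hc => h ((hiff t).mpr hc))]
        simp [hEdef, h]
    have hsub : Finset.range ((t₁ : ℕ) + 1) ⊆ Finset.range d := by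
      apply Finset.range_subset_range.mpr; have := t₁.isLt; omega
    have step2 : ∑ i ∈ Finset.range d, (if i ≤ (t₁ : ℕ) then g (i + 1) - g i else 0)
        = ∑ i ∈ Finset.range ((t₁ : ℕ) + 1), (g (i + 1) - g i) := by
      rw [← Finset.sum_subset hsub]
      · apply Finset.sum_congr rfl
        intro i hi
        rw [if_pos (by simp at hi; omega)]
      · intro i _ hi
        rw [if_neg (by simp at hi; omega)]
    rw [step1, step2, Finset.sum_range_sub g ((t₁ : ℕ) + 1), hg0, sub_zero, hgt t₁, hμt₁]
  -- derived summation identities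
  have Htot : ∑ t : Fin d, (g ((t:ℕ) + 1) - g (t:ℕ)) * (∑ n, E t n) = 1 := by
    calc ∑ t : Fin d, (g ((t:ℕ) + 1) - g (t:ℕ)) * (∑ n, E t n)
        = ∑ t : Fin d, ∑ n, (g ((t:ℕ) + 1) - g (t:ℕ)) * E t n := by
          simp_rw [Finset.mul_sum]
      _ = ∑ n, ∑ t : Fin d, (g ((t:ℕ) + 1) - g (t:ℕ)) * E t n := Finset.sum_comm
      _ = ∑ n, lam n ^ 2 := by simp_rw [K1]
      _ = 1 := hsum
  have HF : ∑ t : Fin d, (g ((t:ℕ) + 1) - g (t:ℕ)) * (∑ n, c n * E t n)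
      = ∑ n, c n * lam n ^ 2 := by
    calc ∑ t : Fin d, (g ((t:ℕ) + 1) - g (t:ℕ)) * (∑ n, c n * E t n)
        = ∑ t : Fin d, ∑ n, c n * ((g ((t:ℕ) + 1) - g (t:ℕ)) * E t n) := by
          simp_rw [Finset.mul_sum]; apply Finset.sum_congr rfl; intros
          apply Finset.sum_congr rfl; intros; ring
      _ = ∑ n, ∑ t : Fin d, c n * ((g ((t:ℕ) + 1) - g (t:ℕ)) * E t n) := Finset.sum_comm
      _ = ∑ n, c n * lam n ^ 2 := by
          apply Finset.sum_congr rfl; intro n _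
          rw [← Finset.mul_sum, K1]
  have Hpair : ∀ m n : Fin d, ∑ t : Fin d, (g ((t:ℕ) + 1) - g (t:ℕ)) * (E t m - E t n) ^ 2
      = |lam m ^ 2 - lam n ^ 2| := by
    have key : ∀ m n : Fin d, lam m ≤ lam n →
        ∑ t : Fin d, (g ((t:ℕ) + 1) - g (t:ℕ)) * (E t m - E t n) ^ 2
          = lam n ^ 2 - lam m ^ 2 := by
      intro m n hmn
      have hsq : ∀ t, (E t m - E t n) ^ 2 = E t n - E t m := by
        intro t
        by_cases h1 : μ t ≤ lam m
        · have h2 : μ t ≤ lam n := le_trans h1 hmn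
          simp [hEdef, h1, h2]
        · by_cases h2 : μ t ≤ lam n <;> simp [hEdef, h1, h2]
      calc ∑ t : Fin d, (g ((t:ℕ) + 1) - g (t:ℕ)) * (E t m - E t n) ^ 2
          = ∑ t : Fin d, ((g ((t:ℕ) + 1) - g (t:ℕ)) * E t n
              - (g ((t:ℕ) + 1) - g (t:ℕ)) * E t m) := by
            apply Finset.sum_congr rfl; intro t _; rw [hsq t]; ring
        _ = lam n ^ 2 - lam m ^ 2 := by rw [Finset.sum_sub_distrib, K1, K1]
    intro m n
    rcases le_total (lam m) (lam n) with h | h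
    · rw [key m n h, abs_of_nonpos (by nlinarith [hlam m, hlam n])]; ring
    · have := key n m h
      have hsymm : ∀ t : Fin d, (E t m - E t n) ^ 2 = (E t n - E t m) ^ 2 := by
        intro t; ring
      simp_rw [hsymm]
      rw [this, abs_of_nonneg (by nlinarith [hlam m, hlam n])]
  have HG : ∑ t : Fin d, (g ((t:ℕ) + 1) - g (t:ℕ)) * (∑ m, ∑ n, x m n * (E t m - E t n) ^ 2)
      ≤ B := by
    calc ∑ t : Fin d, (g ((t:ℕ) + 1) - g (t:ℕ)) * (∑ m, ∑ n, x m n * (E t m - E t n) ^ 2)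
        = ∑ t : Fin d, ∑ m, ∑ n, x m n * ((g ((t:ℕ) + 1) - g (t:ℕ)) * (E t m - E t n) ^ 2) := by
          apply Finset.sum_congr rfl; intros t _
          rw [Finset.mul_sum]; apply Finset.sum_congr rfl; intros m _
          rw [Finset.mul_sum]; apply Finset.sum_congr rfl; intros; ring
      _ = ∑ m, ∑ n, ∑ t : Fin d, x m n * ((g ((t:ℕ) + 1) - g (t:ℕ)) * (E t m - E t n) ^ 2) := by
          rw [Finset.sum_comm]
          apply Finset.sum_congr rfl; intros m _
          rw [Finset.sum_comm]
      _ = ∑ m, ∑ n, x m n * |lam m ^ 2 - lam n ^ 2| := by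
          apply Finset.sum_congr rfl; intros m _
          apply Finset.sum_congr rfl; intros n _
          rw [← Finset.mul_sum, Hpair]
      _ ≤ B := hB
  -- selection via Markov
  set eps : ℝ := ∑ n, c n * lam n ^ 2 with hepsdef
  have heps0 : 0 ≤ eps := Finset.sum_nonneg fun n _ => mul_nonneg (hc n) (sq_nonneg _)
  have hB0 : 0 ≤ B := le_trans (Finset.sum_nonneg fun m _ => Finset.sum_nonneg fun n _ =>
    mul_nonneg (hx m n) (abs_nonneg _)) hB
  have key : ∃ t : Fin d, 0 < (∑ n, E t n) ∧
      (∑ n, c n * E t n) ≤ 4 * eps * (∑ n, E t n) ∧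
      (∑ m, ∑ n, x m n * (E t m - E t n) ^ 2) ≤ 4 * B * (∑ n, E t n) := by
    by_contra hcon
    push_neg at hcon
    set w : Fin d → ℝ := fun t => g ((t:ℕ) + 1) - g (t:ℕ) with hwdef
    set Nt : Fin d → ℝ := fun t => ∑ n, E t n with hNdef
    set Ft : Fin d → ℝ := fun t => ∑ n, c n * E t n with hFdef
    set Gt : Fin d → ℝ := fun t => ∑ m, ∑ n, x m n * (E t m - E t n) ^ 2 with hGdef
    have Htot' : ∑ t : Fin d, w t * Nt t = 1 := Htot
    have HF' : ∑ t : Fin d, w t * Ft t = eps := HF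
    have HG' : ∑ t : Fin d, w t * Gt t ≤ B := HG
    have hN0 : ∀ t, 0 ≤ Nt t := fun t => Finset.sum_nonneg fun n _ => hE0 t n
    have hF0 : ∀ t, 0 ≤ Ft t := fun t => Finset.sum_nonneg fun n _ =>
      mul_nonneg (hc n) (hE0 t n)
    have hG0 : ∀ t, 0 ≤ Gt t := fun t => Finset.sum_nonneg fun m _ =>
      Finset.sum_nonneg fun n _ => mul_nonneg (hx m n) (sq_nonneg _)
    set A1 : Finset (Fin d) := Finset.univ.filter (fun t => 4 * eps * Nt t < Ft t) with hA1def
    set A2 : Finset (Fin d) := Finset.univ.filter (fun t => 4 * B * Nt t < Gt t) with hA2def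
    have hzero : ∀ t : Fin d, t ∉ A1 → t ∉ A2 → w t * Nt t = 0 := by
      intro t h1 h2
      rcases eq_or_lt_of_le (hN0 t) with h | h
      · rw [← h, mul_zero]
      · exfalso
        simp [hA1def] at h1
        simp [hA2def] at h2
        exact absurd (hcon t h h1) (not_lt.mpr h2)
    have hsum1 : ∑ t ∈ A1 ∪ A2, w t * Nt t = 1 := by
      rw [Finset.sum_subset (Finset.subset_univ (A1 ∪ A2))]
      · exact Htot'
      · intro t _ ht
        simp only [Finset.mem_union] at ht
        push_neg at ht
        exact hzero t ht.1 ht.2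
    have hwN0 : ∀ t, 0 ≤ w t * Nt t := fun t => mul_nonneg (hw t) (hN0 t)
    have hsplit : (1 : ℝ) ≤ ∑ t ∈ A1, w t * Nt t + ∑ t ∈ A2, w t * Nt t := by
      rw [← hsum1]
      have h1 : A1 ∪ A2 = A1 ∪ (A2 \ A1) := (Finset.union_sdiff_self_eq_union).symm
      rw [h1, Finset.sum_union Finset.disjoint_sdiff]
      have h2 : ∑ t ∈ A2 \ A1, w t * Nt t ≤ ∑ t ∈ A2, w t * Nt t :=
        Finset.sum_le_sum_of_subset_of_nonneg Finset.sdiff_subset (fun t _ _ => hwN0 t)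
      linarith
    have hbound1 : ∑ t ∈ A1, w t * Nt t ≤ 1 / 4 := by
      rcases eq_or_lt_of_le heps0 with h | h
      · have hall : ∀ t ∈ Finset.univ, 0 ≤ w t * Ft t :=
          fun t _ => mul_nonneg (hw t) (hF0 t)
        have hzs : ∑ t : Fin d, w t * Ft t = 0 := by rw [HF', ← h]
        have hz := (Finset.sum_eq_zero_iff_of_nonneg hall).mp hzs
        have : ∀ t ∈ A1, w t * Nt t = 0 := by
          intro t ht
          simp only [hA1def, Finset.mem_filter] at ht
          have hFt : 0 < Ft t := lt_of_le_of_lt (by rw [← h]; simp) ht.2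
          have hwt : w t = 0 := by
            have := hz t (Finset.mem_univ t)
            rcases mul_eq_zero.mp this with h' | h'
            · exact h'
            · exact absurd h' (ne_of_gt hFt)
          rw [hwt, zero_mul]
        rw [Finset.sum_eq_zero this]; norm_num
      · have hstep : ∀ t ∈ A1, w t * Nt t ≤ w t * Ft t / (4 * eps) := by
          intro t ht
          simp only [hA1def, Finset.mem_filter] at ht
          have h4 : (0:ℝ) < 4 * eps := by linarith
          rw [le_div_iff₀ h4]
          have : Nt t * (4 * eps) ≤ Ft t := by nlinarith [ht.2]
          calc w t * Nt t * (4 * eps) = w t * (Nt t * (4 * eps)) := by ring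
            _ ≤ w t * Ft t := mul_le_mul_of_nonneg_left this (hw t)
        calc ∑ t ∈ A1, w t * Nt t ≤ ∑ t ∈ A1, w t * Ft t / (4 * eps) :=
              Finset.sum_le_sum hstep
          _ ≤ ∑ t ∈ Finset.univ, w t * Ft t / (4 * eps) := by
              apply Finset.sum_le_sum_of_subset_of_nonneg (Finset.subset_univ A1)
              intro t _ _
              exact div_nonneg (mul_nonneg (hw t) (hF0 t)) (by linarith)
          _ = eps / (4 * eps) := by rw [← Finset.sum_div, HF']
          _ = 1 / 4 := by
              rw [div_eq_div_iff (by positivity) (by norm_num : (4:ℝ) ≠ 0)]; ring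
    have hbound2 : ∑ t ∈ A2, w t * Nt t ≤ 1 / 4 := by
      rcases eq_or_lt_of_le hB0 with h | h
      · have hall : ∀ t ∈ Finset.univ, 0 ≤ w t * Gt t :=
          fun t _ => mul_nonneg (hw t) (hG0 t)
        have hzs : ∑ t : Fin d, w t * Gt t = 0 :=
          le_antisymm (h ▸ HG') (Finset.sum_nonneg hall)
        have hz := (Finset.sum_eq_zero_iff_of_nonneg hall).mp hzs
        have : ∀ t ∈ A2, w t * Nt t = 0 := by
          intro t ht
          simp only [hA2def, Finset.mem_filter] at ht
          have hGt : 0 < Gt t := lt_of_le_of_lt (by rw [← h]; simp) ht.2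
          have hwt : w t = 0 := by
            have := hz t (Finset.mem_univ t)
            rcases mul_eq_zero.mp this with h' | h'
            · exact h'
            · exact absurd h' (ne_of_gt hGt)
          rw [hwt, zero_mul]
        rw [Finset.sum_eq_zero this]; norm_num
      · have hstep : ∀ t ∈ A2, w t * Nt t ≤ w t * Gt t / (4 * B) := by
          intro t ht
          simp only [hA2def, Finset.mem_filter] at ht
          have h4 : (0:ℝ) < 4 * B := by linarith
          rw [le_div_iff₀ h4]
          have : Nt t * (4 * B) ≤ Gt t := by nlinarith [ht.2]
          calc w t * Nt t * (4 * B) = w t * (Nt t * (4 * B)) := by ring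
            _ ≤ w t * Gt t := mul_le_mul_of_nonneg_left this (hw t)
        calc ∑ t ∈ A2, w t * Nt t ≤ ∑ t ∈ A2, w t * Gt t / (4 * B) :=
              Finset.sum_le_sum hstep
          _ ≤ ∑ t ∈ Finset.univ, w t * Gt t / (4 * B) := by
              apply Finset.sum_le_sum_of_subset_of_nonneg (Finset.subset_univ A2)
              intro t _ _
              exact div_nonneg (mul_nonneg (hw t) (hG0 t)) (by linarith)
          _ ≤ B / (4 * B) := by
              rw [← Finset.sum_div]
              exact (div_le_div_iff_of_pos_right (by linarith)).mpr HG'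
          _ = 1 / 4 := by
              rw [div_eq_div_iff (by positivity) (by norm_num : (4:ℝ) ≠ 0)]; ring
    linarith
  obtain ⟨t, htN, htF, htG⟩ := key
  exact ⟨E t, hE01 t, htN, htF, htG⟩
/-- There is a universal constant `C` such that: for positive semidefinite `σ ≠ 0` of
trace `1`, Hermitian `T₁,…,T_k`, and Hermitian `X₁,…,X_ℓ` squaring to the identity,
with `ε = (1/k)Σᵢ‖Tᵢσ^{1/2}‖_F²` and `δ = (1/ℓ)Σⱼ‖[Xⱼ,σ^{1/2}]‖_F²`, there is a nonzero
orthogonal projection `R` with `(1/k)Σᵢ‖TᵢR‖_F² ≤ C ε Tr(R)` and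
`(1/ℓ)Σⱼ‖[Xⱼ,R]‖_F² ≤ C δ^{1/2} Tr(R)`. -/
theorem exists_good_projection : ∃ C : ℝ, 0 < C ∧
    ∀ (d k ℓ : ℕ), 0 < k → 0 < ℓ →
    ∀ (σ : Matrix (Fin d) (Fin d) ℂ) (hσ : σ.PosSemidef), σ.trace = 1 → σ ≠ 0 →
    ∀ (T : Fin k → Matrix (Fin d) (Fin d) ℂ) (X : Fin ℓ → Matrix (Fin d) (Fin d) ℂ),
      (∀ i, (T i).IsHermitian) → (∀ j, (X j).IsHermitian) →
      (∀ j, X j * X j = 1) →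
      ∃ R : Matrix (Fin d) (Fin d) ℂ, R ≠ 0 ∧ Rᴴ = R ∧ R * R = R ∧
        (1 / (k : ℝ)) * ∑ i, frobNorm (T i * R) ^ 2
          ≤ C * ((1 / (k : ℝ)) * ∑ i, frobNorm (T i * hσ.sqrt) ^ 2) * R.trace.re ∧
        (1 / (ℓ : ℝ)) * ∑ j, frobNorm (X j * R - R * X j) ^ 2
          ≤ C * Real.sqrt ((1 / (ℓ : ℝ)) * ∑ j, frobNorm (X j * hσ.sqrt - hσ.sqrt * X j) ^ 2)
              * R.trace.re := by
  refine ⟨8, by norm_num, ?_⟩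
  intro d k ℓ hk hℓ σ hσ hTr hσne T X hT hX hXsq
  have hkR : (0:ℝ) < (k:ℝ) := by exact_mod_cast hk
  have hℓR : (0:ℝ) < (ℓ:ℝ) := by exact_mod_cast hℓ
  have hρ : (hσ.sqrt).PosSemidef := hσ.posSemidef_sqrt
  have hherm : (hσ.sqrt).IsHermitian := hρ.1
  set U : Matrix (Fin d) (Fin d) ℂ := (hherm.eigenvectorUnitary : Matrix (Fin d) (Fin d) ℂ)
    with hUdef
  set lam : Fin d → ℝ := hherm.eigenvalues with hlamdef
  have hU1 : Uᴴ * U = 1 := by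
    have := Matrix.mem_unitaryGroup_iff'.mp hherm.eigenvectorUnitary.2
    simpa [hUdef, Matrix.star_eq_conjTranspose] using this
  have hU2 : U * Uᴴ = 1 := by
    have := Matrix.mem_unitaryGroup_iff.mp hherm.eigenvectorUnitary.2
    simpa [hUdef, Matrix.star_eq_conjTranspose] using this
  set D : Matrix (Fin d) (Fin d) ℂ := Matrix.diagonal (fun n => (lam n : ℂ)) with hDdef
  have hspec : hσ.sqrt = U * D * Uᴴ := by
    have h := hherm.spectral_theorem
    rw [h]
    rfl
  have hUc : ∀ M : Matrix (Fin d) (Fin d) ℂ, U * (Uᴴ * M * U) * Uᴴ = M := by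
    intro M
    calc U * (Uᴴ * M * U) * Uᴴ = (U * Uᴴ) * M * (U * Uᴴ) := by simp only [Matrix.mul_assoc]
      _ = M := by rw [hU2, Matrix.one_mul, Matrix.mul_one]
  have hlam0 : ∀ n, 0 ≤ lam n := fun n => hρ.eigenvalues_nonneg n
  -- trace condition
  have hsum : ∑ n, lam n ^ 2 = 1 := by
    have h1 : σ.trace = ((∑ n, lam n ^ 2 : ℝ) : ℂ) := by
      conv_lhs => rw [← hσ.sqrt_mul_self, hspec]
      rw [conj_mul_conj hU1, trace_conj hU1, hDdef, Matrix.diagonal_mul_diagonal,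
        Matrix.trace_diagonal]
      push_cast
      apply Finset.sum_congr rfl; intros; ring
    rw [h1] at hTr
    exact_mod_cast hTr
  -- entrywise formulas for products with sqrt σ
  have hfrobT : ∀ (i : Fin k),
      frobNorm (T i * hσ.sqrt) ^ 2
        = ∑ m, ∑ n, Complex.normSq ((Uᴴ * T i * U) m n) * lam n ^ 2 := by
    intro i
    have h1 : T i * hσ.sqrt = U * ((Uᴴ * T i * U) * D) * Uᴴ := by
      conv_lhs => rw [hspec, ← hUc (T i)]
      rw [conj_mul_conj hU1]
    rw [h1, frobNorm_conj hU1, frobNorm_sq_eq]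
    apply Finset.sum_congr rfl; intro m _
    apply Finset.sum_congr rfl; intro n _
    rw [hDdef, Matrix.mul_diagonal, Complex.normSq_mul, Complex.normSq_ofReal]
    ring
  have hfrobX : ∀ (j : Fin ℓ),
      frobNorm (X j * hσ.sqrt - hσ.sqrt * X j) ^ 2
        = ∑ m, ∑ n, Complex.normSq ((Uᴴ * X j * U) m n) * (lam m - lam n) ^ 2 := by
    intro j
    have e1 : X j * hσ.sqrt = U * ((Uᴴ * X j * U) * D) * Uᴴ := by
      conv_lhs => rw [hspec, ← hUc (X j)]
      rw [conj_mul_conj hU1]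
    have e2 : hσ.sqrt * X j = U * (D * (Uᴴ * X j * U)) * Uᴴ := by
      conv_lhs => rw [hspec, ← hUc (X j)]
      rw [conj_mul_conj hU1]
    have e3 : ∀ P Q : Matrix (Fin d) (Fin d) ℂ,
        U * P * Uᴴ - U * Q * Uᴴ = U * (P - Q) * Uᴴ := by
      intro P Q; rw [Matrix.mul_sub, Matrix.sub_mul]
    rw [e1, e2, e3, frobNorm_conj hU1, frobNorm_sq_eq]
    apply Finset.sum_congr rfl; intro m _
    apply Finset.sum_congr rfl; intro n _
    rw [Matrix.sub_apply, hDdef, Matrix.mul_diagonal, Matrix.diagonal_mul]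
    have h4 : (Uᴴ * X j * U) m n * ((lam n : ℝ) : ℂ) - ((lam m : ℝ) : ℂ) * (Uᴴ * X j * U) m n
        = (Uᴴ * X j * U) m n * (((lam n : ℝ) - (lam m : ℝ) : ℝ) : ℂ) := by
      push_cast; ring
    rw [h4, Complex.normSq_mul, Complex.normSq_ofReal]
    ring
  -- row/column sums for the conjugated X's
  have hXpherm : ∀ j, (Uᴴ * X j * U)ᴴ = Uᴴ * X j * U := by
    intro j
    simp [Matrix.conjTranspose_mul, Matrix.conjTranspose_conjTranspose, (hX j).eq,
      Matrix.mul_assoc]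
  have hXp2 : ∀ j, (Uᴴ * X j * U) * (Uᴴ * X j * U) = 1 := by
    intro j
    have h1 : (Uᴴ * X j * U) * (Uᴴ * X j * U) = Uᴴ * (X j * (U * Uᴴ) * X j) * U := by
      simp only [Matrix.mul_assoc]
    have h2 : X j * (U * Uᴴ) * X j = X j * X j := by rw [hU2, Matrix.mul_one]
    rw [h1, h2, hXsq j, Matrix.mul_one, hU1]
  have hrow : ∀ j n, ∑ m, Complex.normSq ((Uᴴ * X j * U) m n) = 1 := by
    intro j n
    have h1 : ((Uᴴ * X j * U) * (Uᴴ * X j * U)) n n = 1 := by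
      rw [hXp2 j]; simp [Matrix.one_apply]
    have h2 : ((Uᴴ * X j * U) * (Uᴴ * X j * U)) n n
        = ((∑ m, Complex.normSq ((Uᴴ * X j * U) m n) : ℝ) : ℂ) := by
      rw [Matrix.mul_apply]
      push_cast
      apply Finset.sum_congr rfl; intro m _
      have h3 : (Uᴴ * X j * U) n m = star ((Uᴴ * X j * U) m n) := by
        conv_lhs => rw [← hXpherm j]
        rw [Matrix.conjTranspose_apply]
      rw [h3, Complex.star_def, ← Complex.normSq_eq_conj_mul_self]
    rw [h2] at h1
    exact_mod_cast h1
  have hcol : ∀ j m, ∑ n, Complex.normSq ((Uᴴ * X j * U) m n) = 1 := by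
    intro j m
    have h1 : ((Uᴴ * X j * U) * (Uᴴ * X j * U)) m m = 1 := by
      rw [hXp2 j]; simp [Matrix.one_apply]
    have h2 : ((Uᴴ * X j * U) * (Uᴴ * X j * U)) m m
        = ((∑ n, Complex.normSq ((Uᴴ * X j * U) m n) : ℝ) : ℂ) := by
      rw [Matrix.mul_apply]
      push_cast
      apply Finset.sum_congr rfl; intro n _
      have h3 : (Uᴴ * X j * U) n m = star ((Uᴴ * X j * U) m n) := by
        conv_lhs => rw [← hXpherm j]
        rw [Matrix.conjTranspose_apply]
      rw [h3, Complex.star_def, Complex.mul_conj]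
    rw [h2] at h1
    exact_mod_cast h1
  -- abbreviations (as plain lambdas)
  set δfr : ℝ := 1 / (ℓ : ℝ) * ∑ j, frobNorm (X j * hσ.sqrt - hσ.sqrt * X j) ^ 2 with hδdef
  -- collapse lemmas
  have collapseT : ∀ q : Fin d → ℝ,
      1 / (k : ℝ) * ∑ i, ∑ m, ∑ n, Complex.normSq ((Uᴴ * T i * U) m n) * q n
        = ∑ n, (1 / (k : ℝ) * ∑ i, ∑ m, Complex.normSq ((Uᴴ * T i * U) m n)) * q n := by
    intro q
    rw [sum_rot (fun i m n => Complex.normSq ((Uᴴ * T i * U) m n) * q n), Finset.mul_sum]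
    apply Finset.sum_congr rfl; intro n _
    simp_rw [← Finset.sum_mul]
    ring
  have collapseX : ∀ q : Fin d → Fin d → ℝ,
      1 / (ℓ : ℝ) * ∑ j, ∑ m, ∑ n, Complex.normSq ((Uᴴ * X j * U) m n) * q m n
        = ∑ m, ∑ n, (1 / (ℓ : ℝ) * ∑ j, Complex.normSq ((Uᴴ * X j * U) m n)) * q m n := by
    intro q
    have h1 : ∑ j, ∑ m, ∑ n, Complex.normSq ((Uᴴ * X j * U) m n) * q m n
        = ∑ m, ∑ n, ∑ j, Complex.normSq ((Uᴴ * X j * U) m n) * q m n := by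
      rw [Finset.sum_comm]
      apply Finset.sum_congr rfl; intro m _
      rw [Finset.sum_comm]
    rw [h1, Finset.mul_sum]
    apply Finset.sum_congr rfl; intro m _
    rw [Finset.mul_sum]
    apply Finset.sum_congr rfl; intro n _
    rw [← Finset.sum_mul]
    ring
  -- nonnegativity of the coefficient functions
  have hc0 : ∀ n, 0 ≤ 1 / (k : ℝ) * ∑ i, ∑ m, Complex.normSq ((Uᴴ * T i * U) m n) := by
    intro n
    apply mul_nonneg (by positivity)
    exact Finset.sum_nonneg fun i _ => Finset.sum_nonneg fun m _ => Complex.normSq_nonneg _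
  have hx0 : ∀ m n, 0 ≤ 1 / (ℓ : ℝ) * ∑ j, Complex.normSq ((Uᴴ * X j * U) m n) := by
    intro m n
    apply mul_nonneg (by positivity)
    exact Finset.sum_nonneg fun j _ => Complex.normSq_nonneg _
  -- row/col sums of x
  have hxrow : ∀ m, ∑ n, 1 / (ℓ : ℝ) * ∑ j, Complex.normSq ((Uᴴ * X j * U) m n) = 1 := by
    intro m
    rw [← Finset.mul_sum, Finset.sum_comm]
    simp_rw [hcol]
    simp
    field_simp
  have hxcol : ∀ n, ∑ m, 1 / (ℓ : ℝ) * ∑ j, Complex.normSq ((Uᴴ * X j * U) m n) = 1 := by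
    intro n
    rw [← Finset.mul_sum, Finset.sum_comm]
    simp_rw [hrow]
    simp
    field_simp
  -- δfr as entry sum
  have hδeq : δfr = ∑ m, ∑ n,
      (1 / (ℓ : ℝ) * ∑ j, Complex.normSq ((Uᴴ * X j * U) m n)) * (lam m - lam n) ^ 2 := by
    rw [hδdef]
    simp_rw [hfrobX]
    exact collapseX (fun m n => (lam m - lam n) ^ 2)
  have hδ0 : 0 ≤ δfr := by
    rw [hδeq]
    exact Finset.sum_nonneg fun m _ => Finset.sum_nonneg fun n _ =>
      mul_nonneg (hx0 m n) (sq_nonneg _)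
  -- Cauchy-Schwarz bound
  have hB : ∑ m, ∑ n, (1 / (ℓ : ℝ) * ∑ j, Complex.normSq ((Uᴴ * X j * U) m n))
      * |lam m ^ 2 - lam n ^ 2| ≤ 2 * Real.sqrt δfr := by
    set x : Fin d → Fin d → ℝ :=
      fun m n => 1 / (ℓ : ℝ) * ∑ j, Complex.normSq ((Uᴴ * X j * U) m n) with hxdef
    set f : Fin d × Fin d → ℝ := fun p => Real.sqrt (x p.1 p.2) * (lam p.1 + lam p.2) with hfdef
    set g : Fin d × Fin d → ℝ := fun p => Real.sqrt (x p.1 p.2) * |lam p.1 - lam p.2| with hgdef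
    have hprod : ∑ m, ∑ n, x m n * |lam m ^ 2 - lam n ^ 2|
        = ∑ p : Fin d × Fin d, f p * g p := by
      rw [Fintype.sum_prod_type]
      apply Finset.sum_congr rfl; intro m _
      apply Finset.sum_congr rfl; intro n _
      have h1 : |lam m ^ 2 - lam n ^ 2| = (lam m + lam n) * |lam m - lam n| := by
        rw [← abs_of_nonneg (by linarith [hlam0 m, hlam0 n] : 0 ≤ lam m + lam n), ← abs_mul]
        congr 1; ring
      have h2 : Real.sqrt (x m n) * Real.sqrt (x m n) = x m n := Real.mul_self_sqrt (hx0 m n)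
      rw [h1, hfdef, hgdef]
      calc x m n * ((lam m + lam n) * |lam m - lam n|)
          = (Real.sqrt (x m n) * Real.sqrt (x m n)) * ((lam m + lam n) * |lam m - lam n|) := by
            rw [h2]
        _ = (Real.sqrt (x m n) * (lam m + lam n)) * (Real.sqrt (x m n) * |lam m - lam n|) := by
            ring
    have hf2 : ∑ p : Fin d × Fin d, f p ^ 2 ≤ 4 := by
      have h1 : ∀ p : Fin d × Fin d, f p ^ 2 ≤ x p.1 p.2 * (2 * lam p.1 ^ 2 + 2 * lam p.2 ^ 2) := by
        intro p
        rw [hfdef]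
        have h2 : (Real.sqrt (x p.1 p.2) * (lam p.1 + lam p.2)) ^ 2
            = x p.1 p.2 * (lam p.1 + lam p.2) ^ 2 := by
          rw [mul_pow, Real.sq_sqrt (hx0 p.1 p.2)]
        rw [h2]
        apply mul_le_mul_of_nonneg_left _ (hx0 p.1 p.2)
        nlinarith [sq_nonneg (lam p.1 - lam p.2)]
      calc ∑ p : Fin d × Fin d, f p ^ 2
          ≤ ∑ p : Fin d × Fin d, x p.1 p.2 * (2 * lam p.1 ^ 2 + 2 * lam p.2 ^ 2) :=
            Finset.sum_le_sum fun p _ => h1 p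
        _ = 2 * (∑ m, ∑ n, x m n * lam m ^ 2) + 2 * (∑ m, ∑ n, x m n * lam n ^ 2) := by
            rw [Fintype.sum_prod_type, Finset.mul_sum, Finset.mul_sum,
              ← Finset.sum_add_distrib]
            apply Finset.sum_congr rfl; intro m _
            rw [Finset.mul_sum, Finset.mul_sum, ← Finset.sum_add_distrib]
            apply Finset.sum_congr rfl; intro n _
            ring
        _ = 4 := by
            have e1 : ∑ m, ∑ n, x m n * lam m ^ 2 = 1 := by
              have : ∀ m, ∑ n, x m n * lam m ^ 2 = lam m ^ 2 := by
                intro m; rw [← Finset.sum_mul, hxrow m, one_mul]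
              simp_rw [this]; exact hsum
            have e2 : ∑ m, ∑ n, x m n * lam n ^ 2 = 1 := by
              rw [Finset.sum_comm]
              have : ∀ n, ∑ m, x m n * lam n ^ 2 = lam n ^ 2 := by
                intro n; rw [← Finset.sum_mul, hxcol n, one_mul]
              simp_rw [this]; exact hsum
            rw [e1, e2]; norm_num
    have hg2 : ∑ p : Fin d × Fin d, g p ^ 2 = δfr := by
      rw [hδeq, Fintype.sum_prod_type]
      apply Finset.sum_congr rfl; intro m _
      apply Finset.sum_congr rfl; intro n _
      rw [hgdef]
      rw [mul_pow, Real.sq_sqrt (hx0 m n), sq_abs]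
    have hS0 : 0 ≤ ∑ p : Fin d × Fin d, f p * g p := by
      apply Finset.sum_nonneg; intro p _
      apply mul_nonneg
      · exact mul_nonneg (Real.sqrt_nonneg _) (by linarith [hlam0 p.1, hlam0 p.2])
      · exact mul_nonneg (Real.sqrt_nonneg _) (abs_nonneg _)
    have hcs : (∑ p : Fin d × Fin d, f p * g p) ^ 2 ≤ 4 * δfr := by
      calc (∑ p : Fin d × Fin d, f p * g p) ^ 2
          ≤ (∑ p : Fin d × Fin d, f p ^ 2) * ∑ p : Fin d × Fin d, g p ^ 2 :=
            Finset.sum_mul_sq_le_sq_mul_sq _ _ _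
        _ ≤ 4 * δfr := by
            rw [hg2]
            exact mul_le_mul_of_nonneg_right hf2 hδ0
    rw [hprod]
    have h5 : ∑ p : Fin d × Fin d, f p * g p ≤ Real.sqrt (4 * δfr) := by
      rw [← Real.sqrt_sq hS0]
      exact Real.sqrt_le_sqrt hcs
    have h6 : Real.sqrt (4 * δfr) = 2 * Real.sqrt δfr := by
      rw [Real.sqrt_mul (by norm_num : (0:ℝ) ≤ 4)]
      congr 1
      rw [show (4:ℝ) = 2 ^ 2 by norm_num, Real.sqrt_sq (by norm_num : (0:ℝ) ≤ 2)]
    rw [h6] at h5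
    exact h5
  -- apply the core selection lemma
  obtain ⟨e, he01, heS, he1, he2⟩ := core_select lam hlam0 hsum
    (fun n => 1 / (k : ℝ) * ∑ i, ∑ m, Complex.normSq ((Uᴴ * T i * U) m n)) hc0
    (fun m n => 1 / (ℓ : ℝ) * ∑ j, Complex.normSq ((Uᴴ * X j * U) m n)) hx0
    (2 * Real.sqrt δfr) hB
  -- define the projection
  set Eℂ : Matrix (Fin d) (Fin d) ℂ := Matrix.diagonal (fun n => (e n : ℂ)) with hEdef
  have htraceR : (U * Eℂ * Uᴴ).trace = ((∑ n, e n : ℝ) : ℂ) := by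
    rw [trace_conj hU1, hEdef, Matrix.trace_diagonal]
    push_cast
    rfl
  have hRtrre : (U * Eℂ * Uᴴ).trace.re = ∑ n, e n := by rw [htraceR, Complex.ofReal_re]
  refine ⟨U * Eℂ * Uᴴ, ?_, ?_, ?_, ?_, ?_⟩
  · intro h
    rw [h] at htraceR
    simp only [Matrix.trace_zero] at htraceR
    have : (∑ n, e n : ℝ) = 0 := by exact_mod_cast htraceR.symm
    linarith
  · have h1 : Eℂᴴ = Eℂ := by
      rw [hEdef, Matrix.diagonal_conjTranspose]
      have hfun : (star fun n => ((e n : ℝ) : ℂ)) = fun n => ((e n : ℝ) : ℂ) := by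
        funext n
        rw [Pi.star_apply, Complex.star_def, Complex.conj_ofReal]
      rw [hfun]
    have h2 : (U * Eℂ * Uᴴ)ᴴ = U * Eℂᴴ * Uᴴ := by
      simp [Matrix.conjTranspose_mul, Matrix.mul_assoc]
    rw [h2, h1]
  · rw [conj_mul_conj hU1]
    have hEE : Eℂ * Eℂ = Eℂ := by
      rw [hEdef, Matrix.diagonal_mul_diagonal]
      have hfun : (fun i => ((e i : ℝ) : ℂ) * ((e i : ℝ) : ℂ)) = fun n => ((e n : ℝ) : ℂ) := by
        funext n
        rcases he01 n with h | h <;> rw [h] <;> norm_num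
      rw [hfun]
    rw [hEE]
  · -- first inequality
    have hTRe : ∀ i, frobNorm (T i * (U * Eℂ * Uᴴ)) ^ 2
        = ∑ m, ∑ n, Complex.normSq ((Uᴴ * T i * U) m n) * e n := by
      intro i
      have h1 : T i * (U * Eℂ * Uᴴ) = U * ((Uᴴ * T i * U) * Eℂ) * Uᴴ := by
        conv_lhs => rw [← hUc (T i)]
        rw [conj_mul_conj hU1]
      rw [h1, frobNorm_conj hU1, frobNorm_sq_eq]
      apply Finset.sum_congr rfl; intro m _
      apply Finset.sum_congr rfl; intro n _
      rw [hEdef, Matrix.mul_diagonal, Complex.normSq_mul, Complex.normSq_ofReal]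
      rcases he01 n with h | h <;> rw [h] <;> ring
    have hLHS : 1 / (k : ℝ) * ∑ i, frobNorm (T i * (U * Eℂ * Uᴴ)) ^ 2
        = ∑ n, (1 / (k : ℝ) * ∑ i, ∑ m, Complex.normSq ((Uᴴ * T i * U) m n)) * e n := by
      simp_rw [hTRe]
      exact collapseT e
    have hEPS : 1 / (k : ℝ) * ∑ i, frobNorm (T i * hσ.sqrt) ^ 2
        = ∑ n, (1 / (k : ℝ) * ∑ i, ∑ m, Complex.normSq ((Uᴴ * T i * U) m n)) * lam n ^ 2 := by
      simp_rw [hfrobT]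
      exact collapseT (fun n => lam n ^ 2)
    have hε0 : 0 ≤ ∑ n, (1 / (k : ℝ) * ∑ i, ∑ m, Complex.normSq ((Uᴴ * T i * U) m n)) * lam n ^ 2 :=
      Finset.sum_nonneg fun n _ => mul_nonneg (hc0 n) (sq_nonneg _)
    rw [hLHS, hEPS, hRtrre]
    calc ∑ n, (1 / (k : ℝ) * ∑ i, ∑ m, Complex.normSq ((Uᴴ * T i * U) m n)) * e n
        ≤ 4 * (∑ n, (1 / (k : ℝ) * ∑ i, ∑ m, Complex.normSq ((Uᴴ * T i * U) m n)) * lam n ^ 2)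
            * (∑ n, e n) := he1
      _ ≤ 8 * (∑ n, (1 / (k : ℝ) * ∑ i, ∑ m, Complex.normSq ((Uᴴ * T i * U) m n)) * lam n ^ 2)
            * (∑ n, e n) := by nlinarith [heS, hε0]
  · -- second inequality
    have hXRe : ∀ j, frobNorm (X j * (U * Eℂ * Uᴴ) - (U * Eℂ * Uᴴ) * X j) ^ 2
        = ∑ m, ∑ n, Complex.normSq ((Uᴴ * X j * U) m n) * (e m - e n) ^ 2 := by
      intro j
      have e1 : X j * (U * Eℂ * Uᴴ) = U * ((Uᴴ * X j * U) * Eℂ) * Uᴴ := by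
        conv_lhs => rw [← hUc (X j)]
        rw [conj_mul_conj hU1]
      have e2 : (U * Eℂ * Uᴴ) * X j = U * (Eℂ * (Uᴴ * X j * U)) * Uᴴ := by
        conv_lhs => rw [← hUc (X j)]
        rw [conj_mul_conj hU1]
      have e3 : ∀ P Q : Matrix (Fin d) (Fin d) ℂ,
          U * P * Uᴴ - U * Q * Uᴴ = U * (P - Q) * Uᴴ := by
        intro P Q; rw [Matrix.mul_sub, Matrix.sub_mul]
      rw [e1, e2, e3, frobNorm_conj hU1, frobNorm_sq_eq]
      apply Finset.sum_congr rfl; intro m _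
      apply Finset.sum_congr rfl; intro n _
      rw [Matrix.sub_apply, hEdef, Matrix.mul_diagonal, Matrix.diagonal_mul]
      have h4 : (Uᴴ * X j * U) m n * ((e n : ℝ) : ℂ) - ((e m : ℝ) : ℂ) * (Uᴴ * X j * U) m n
          = (Uᴴ * X j * U) m n * (((e n : ℝ) - (e m : ℝ) : ℝ) : ℂ) := by
        push_cast; ring
      rw [h4, Complex.normSq_mul, Complex.normSq_ofReal]
      ring
    have hLHS : 1 / (ℓ : ℝ) * ∑ j, frobNorm (X j * (U * Eℂ * Uᴴ) - (U * Eℂ * Uᴴ) * X j) ^ 2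
        = ∑ m, ∑ n, (1 / (ℓ : ℝ) * ∑ j, Complex.normSq ((Uᴴ * X j * U) m n)) * (e m - e n) ^ 2 := by
      simp_rw [hXRe]
      exact collapseX (fun m n => (e m - e n) ^ 2)
    rw [hLHS, hRtrre]
    calc ∑ m, ∑ n, (1 / (ℓ : ℝ) * ∑ j, Complex.normSq ((Uᴴ * X j * U) m n)) * (e m - e n) ^ 2
        ≤ 4 * (2 * Real.sqrt δfr) * (∑ n, e n) := he2
      _ = 8 * Real.sqrt δfr * (∑ n, e n) := by ring
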